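/- Let Q be a sub-rate matrix, D : Set ι, and A ⊆ B ⊆ D subsets of ι. Then for every x ∉ D, every real t ≥ 0, and every x0 : ι, ∑ y ∈ A, (Matrix.exp ℝ (t • Q_A)) x0 y * Q y x ≤ ∑ y ∈ B, (Matrix.exp ℝ (t • Q_B)) x0 y * Q y x. (Finite-state core of Theorem 1.1(i) of the paper: the ETFSP approximations μ^r(t,x) = ∑_{y ∈ D_r} ν^r(t,y) q(y,x) of the exit density form an increasing family as the truncation grows.) -/

import Mathlib

/-- Mathlib's exponential, specialized to real matrices (`Matrix.exp ℝ`). -/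
noncomputable def Matrix.exp (𝕂 : Type*) [Field 𝕂] {ι : Type*} [Fintype ι] [DecidableEq ι]
    [Algebra 𝕂 ℝ] (A : Matrix ι ι ℝ) : Matrix ι ι ℝ :=
  (NormedSpace.expSeries 𝕂 (Matrix ι ι ℝ)).sum A

open Classical in
/-- The truncation `Q_A` of `Q` to `A`: every state outside `A` is made absorbing. -/
noncomputable def Matrix.truncation {ι : Type*} (Q : Matrix ι ι ℝ) (A : Set ι) :
    Matrix ι ι ℝ :=
  Matrix.of fun x y => if x ∈ A then Q x y else 0

private lemma pow_entry_nonneg {ι : Type*} [Fintype ι] [DecidableEq ι]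
    (M : Matrix ι ι ℝ) (h : ∀ x y, 0 ≤ M x y) : ∀ n x y, 0 ≤ (M ^ n) x y := by
  intro n
  induction n with
  | zero =>
    intro x y
    rw [pow_zero, Matrix.one_apply]
    split <;> norm_num
  | succ n ih =>
    intro x y
    rw [pow_succ, Matrix.mul_apply]
    exact Finset.sum_nonneg fun z _ => mul_nonneg (ih x z) (h z y)

private lemma pow_absorbing {ι : Type*} [Fintype ι] [DecidableEq ι]
    (M : Matrix ι ι ℝ) (c : ℝ) (z : ι) (hz : ∀ w, M z w = if z = w then c else 0) :
    ∀ n y, (M ^ n) z y = c ^ n * (if z = y then 1 else 0) := by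
  intro n
  induction n with
  | zero =>
    intro y
    rw [pow_zero, Matrix.one_apply]
    split <;> simp
  | succ n ih =>
    intro y
    rw [pow_succ', Matrix.mul_apply, Finset.sum_eq_single z]
    · rw [hz z, if_pos rfl, ih y]
      ring
    · intro w _ hw
      rw [hz w, if_neg (fun h => hw h.symm), zero_mul]
    · intro h
      exact absurd (Finset.mem_univ z) h

private lemma pow_entry_mono {ι : Type*} [Fintype ι] [DecidableEq ι]
    (MA MB : Matrix ι ι ℝ) (c : ℝ) (A : Set ι) [DecidablePred (· ∈ A)]
    (hAnn : ∀ x y, 0 ≤ MA x y) (hBnn : ∀ x y, 0 ≤ MB x y)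
    (habs : ∀ z ∉ A, ∀ w, MA z w = if z = w then c else 0)
    (hle : ∀ x z, z ∈ A → MA x z ≤ MB x z) :
    ∀ n x y, y ∈ A → (MA ^ n) x y ≤ (MB ^ n) x y := by
  intro n
  induction n with
  | zero => intro x y _; rw [pow_zero, pow_zero]
  | succ n ih =>
    intro x y hy
    rw [pow_succ', pow_succ', Matrix.mul_apply, Matrix.mul_apply]
    have h0 : ∀ z ∈ Finset.univ, z ∉ Finset.univ.filter (· ∈ A) →
        MA x z * (MA ^ n) z y = 0 := by
      intro z _ hz
      have hzA : z ∉ A := by simpa using hz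
      rw [pow_absorbing MA c z (habs z hzA) n y, if_neg (by rintro rfl; exact hzA hy),
        mul_zero, mul_zero]
    calc ∑ z, MA x z * (MA ^ n) z y
        = ∑ z ∈ Finset.univ.filter (· ∈ A), MA x z * (MA ^ n) z y :=
          (Finset.sum_subset (Finset.filter_subset _ _) h0).symm
      _ ≤ ∑ z ∈ Finset.univ.filter (· ∈ A), MB x z * (MB ^ n) z y := by
          refine Finset.sum_le_sum fun z hz => ?_
          have hzA : z ∈ A := by simpa using hz
          exact mul_le_mul (hle x z hzA) (ih z y hy)
            (pow_entry_nonneg MA hAnn n z y) (hBnn x z)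
      _ ≤ ∑ z, MB x z * (MB ^ n) z y :=
          Finset.sum_le_sum_of_subset_of_nonneg (Finset.filter_subset _ _)
            (fun z _ _ => mul_nonneg (hBnn x z) (pow_entry_nonneg MB hBnn n z y))

/-- For a sub-rate matrix `Q`, a domain `D` and truncated domains `A ⊆ B ⊆ D`, the ETFSP
approximations of the exit density, `∑_{y ∈ A} exp (t • Q_A) x0 y * Q y x` for `x ∉ D`,
form an increasing family as the truncation grows. -/
theorem matrix_exit_density_truncation_monotone {ι : Type*} [Fintype ι] [DecidableEq ι]
    [Nonempty ι] (Q : Matrix ι ι ℝ) (hMetzler : ∀ x y, x ≠ y → Q x y ≥ 0)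
    (hrow : ∀ x, ∑ y, Q x y ≤ 0) (D A B : Set ι) (hAB : A ⊆ B) (hBD : B ⊆ D) :
    ∀ x ∉ D, ∀ t : ℝ, 0 ≤ t → ∀ x0 : ι,
      ∑ᶠ y ∈ A, Matrix.exp ℝ (t • Q.truncation A) x0 y * Q y x ≤
        ∑ᶠ y ∈ B, Matrix.exp ℝ (t • Q.truncation B) x0 y * Q y x := by
  classical
  intro x hxD t ht x0
  -- the shift constant
  set c : ℝ := ∑ y, -Q y y with hc_def
  have hdiag : ∀ y, Q y y ≤ 0 := by
    intro y
    have h2 : 0 ≤ ∑ z ∈ Finset.univ.erase y, Q y z :=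
      Finset.sum_nonneg fun z hz => hMetzler y z (Finset.ne_of_mem_erase hz).symm
    have h3 : Q y y + ∑ z ∈ Finset.univ.erase y, Q y z = ∑ z, Q y z :=
      Finset.add_sum_erase _ _ (Finset.mem_univ y)
    have h1 := hrow y
    linarith
  have hcge : ∀ y, -Q y y ≤ c := fun y =>
    Finset.single_le_sum (f := fun z => -Q z z)
      (fun z _ => neg_nonneg.2 (hdiag z)) (Finset.mem_univ y)
  have hc0 : 0 ≤ c := Finset.sum_nonneg fun z _ => neg_nonneg.2 (hdiag z)
  -- shifted truncations
  set N : Set ι → Matrix ι ι ℝ := fun S => Q.truncation S + c • (1 : Matrix ι ι ℝ) with hN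
  have htrunc : ∀ (S : Set ι) (u v : ι),
      Q.truncation S u v = if u ∈ S then Q u v else 0 := by
    intro S u v
    simp only [Matrix.truncation, Matrix.of_apply]
  have hNapp : ∀ (S : Set ι) (u v : ι),
      N S u v = (if u ∈ S then Q u v else 0) + (if u = v then c else 0) := by
    intro S u v
    simp only [hN, Matrix.add_apply, Matrix.smul_apply, Matrix.one_apply, htrunc,
      smul_eq_mul, mul_ite, mul_one, mul_zero]
  have hNnn : ∀ (S : Set ι) (u v : ι), 0 ≤ N S u v := by
    intro S u v
    rw [hNapp]
    rcases eq_or_ne u v with rfl | huv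
    · rw [if_pos rfl]
      split_ifs with h
      · linarith [hcge u]
      · linarith
    · rw [if_neg huv, add_zero]
      split_ifs with h
      · exact hMetzler u v huv
      · exact le_refl 0
  have habs : ∀ (S : Set ι), ∀ z ∉ S, ∀ w, N S z w = if z = w then c else 0 := by
    intro S z hz w
    rw [hNapp, if_neg hz, zero_add]
  have hle : ∀ (u z : ι), z ∈ A → N A u z ≤ N B u z := by
    intro u z hzA
    rw [hNapp, hNapp]
    have : (if u ∈ A then Q u z else 0) ≤ (if u ∈ B then Q u z else 0) := by
      by_cases hu : u ∈ A
      · rw [if_pos hu, if_pos (hAB hu)]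
      · rw [if_neg hu]
        by_cases hu' : u ∈ B
        · rw [if_pos hu']
          exact hMetzler u z (by rintro rfl; exact hu hzA)
        · rw [if_neg hu']
    linarith
  -- normed structure on matrices
  letI : SeminormedRing (Matrix ι ι ℝ) := Matrix.linftyOpSemiNormedRing
  letI : NormedRing (Matrix ι ι ℝ) := Matrix.linftyOpNormedRing
  letI : NormedAlgebra ℝ (Matrix ι ι ℝ) := Matrix.linftyOpNormedAlgebra
  letI : NormedAlgebra ℚ (Matrix ι ι ℝ) := Matrix.linftyOpNormedAlgebra
  -- exponential decomposition
  have key : ∀ S : Set ι, Matrix.exp ℝ (t • Q.truncation S)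
      = Real.exp (-(t * c)) • NormedSpace.exp (t • N S) := by
    intro S
    have hsplit : t • Q.truncation S = (-(t * c)) • (1 : Matrix ι ι ℝ) + t • N S := by
      rw [hN]
      module
    have hcomm : Commute ((-(t * c)) • (1 : Matrix ι ι ℝ)) (t • N S) := by
      simpa using (Commute.one_left (t • N S)).smul_left (-(t * c))
    have h1 : NormedSpace.exp ((-(t * c)) • (1 : Matrix ι ι ℝ))
        = Real.exp (-(t * c)) • (1 : Matrix ι ι ℝ) := by
      have := NormedSpace.algebraMap_exp_comm (𝔸 := Matrix ι ι ℝ) (-(t * c))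
      rw [← Real.exp_eq_exp_ℝ, Algebra.algebraMap_eq_smul_one, Algebra.algebraMap_eq_smul_one] at this
      exact this.symm
    rw [Matrix.exp, ← NormedSpace.exp_eq_expSeries_sum ℝ, hsplit]
    exact (NormedSpace.exp_add_of_commute hcomm).trans
      ((congrArg (· * NormedSpace.exp (t • N S)) h1).trans (by rw [smul_mul_assoc, one_mul]))
  -- entrywise series for the exponential
  have hentry : ∀ (S : Set ι) (y : ι),
      HasSum (fun n : ℕ => (n.factorial : ℝ)⁻¹ * (t ^ n * ((N S ^ n) x0 y)))
        (NormedSpace.exp (t • N S) x0 y) := by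
    intro S y
    have hs : HasSum (fun n : ℕ => (n.factorial : ℝ)⁻¹ • (t • N S) ^ n)
        (NormedSpace.exp (t • N S)) := by
      rw [NormedSpace.exp_eq_tsum ℝ]
      exact (NormedSpace.expSeries_summable' (𝕂 := ℝ) (t • N S)).hasSum
    have := hs.mapL (Matrix.entryLinearMap ℝ ℝ x0 y).toContinuousLinearMap
    simpa [smul_pow, Matrix.smul_apply, smul_eq_mul, mul_assoc] using this
  -- entrywise nonnegativity and monotonicity of exp (t • N S)
  have hterm_nonneg : ∀ (S : Set ι) (n : ℕ) (y : ι),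
      0 ≤ (n.factorial : ℝ)⁻¹ * (t ^ n * ((N S ^ n) x0 y)) := by
    intro S n y
    have := pow_entry_nonneg (N S) (hNnn S) n x0 y
    positivity
  have hexp_nonneg : ∀ (S : Set ι) (y : ι), 0 ≤ NormedSpace.exp (t • N S) x0 y :=
    fun S y => hasSum_le (fun n => hterm_nonneg S n y) hasSum_zero (hentry S y)
  have hexp_mono : ∀ y ∈ A,
      NormedSpace.exp (t • N A) x0 y ≤ NormedSpace.exp (t • N B) x0 y := by
    intro y hy
    refine hasSum_le (fun n => ?_) (hentry A y) (hentry B y)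
    have hpm := pow_entry_mono (N A) (N B) c A (hNnn A) (hNnn B) (habs A) hle n x0 y hy
    have h1 : (0:ℝ) ≤ (n.factorial : ℝ)⁻¹ := by positivity
    have h2 : (0:ℝ) ≤ t ^ n := pow_nonneg ht n
    exact mul_le_mul_of_nonneg_left (mul_le_mul_of_nonneg_left hpm h2) h1
  -- Q y x is nonnegative on B
  have hQnn : ∀ y ∈ B, 0 ≤ Q y x := fun y hy =>
    hMetzler y x (by rintro rfl; exact hxD (hBD hy))
  -- convert finsums to finset sums
  have hAfin : ∑ᶠ y ∈ A, Matrix.exp ℝ (t • Q.truncation A) x0 y * Q y x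
      = ∑ y ∈ Finset.univ.filter (· ∈ A),
          Matrix.exp ℝ (t • Q.truncation A) x0 y * Q y x := by
    rw [← finsum_mem_coe_finset]
    congr 1
    ext z; simp
  have hBfin : ∑ᶠ y ∈ B, Matrix.exp ℝ (t • Q.truncation B) x0 y * Q y x
      = ∑ y ∈ Finset.univ.filter (· ∈ B),
          Matrix.exp ℝ (t • Q.truncation B) x0 y * Q y x := by
    rw [← finsum_mem_coe_finset]
    congr 1
    ext z; simp
  rw [hAfin, hBfin]
  have hexpent : ∀ (S : Set ι) (y : ι), Matrix.exp ℝ (t • Q.truncation S) x0 y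
      = Real.exp (-(t * c)) * NormedSpace.exp (t • N S) x0 y := by
    intro S y
    rw [key S, Matrix.smul_apply, smul_eq_mul]
  calc ∑ y ∈ Finset.univ.filter (· ∈ A), Matrix.exp ℝ (t • Q.truncation A) x0 y * Q y x
      ≤ ∑ y ∈ Finset.univ.filter (· ∈ A), Matrix.exp ℝ (t • Q.truncation B) x0 y * Q y x := by
        refine Finset.sum_le_sum fun y hy => ?_
        have hyA : y ∈ A := by simpa using hy
        refine mul_le_mul_of_nonneg_right ?_ (hQnn y (hAB hyA))
        rw [hexpent A y, hexpent B y]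
        exact mul_le_mul_of_nonneg_left (hexp_mono y hyA) (Real.exp_nonneg _)
    _ ≤ ∑ y ∈ Finset.univ.filter (· ∈ B), Matrix.exp ℝ (t • Q.truncation B) x0 y * Q y x := by
        refine Finset.sum_le_sum_of_subset_of_nonneg ?_ fun y hy _ => ?_
        · intro z hz
          simp only [Finset.mem_filter, Finset.mem_univ, true_and] at *
          exact hAB hz
        · have hyB : y ∈ B := by simpa using hy
          refine mul_nonneg ?_ (hQnn y hyB)
          rw [hexpent B y]
          exact mul_nonneg (Real.exp_nonneg _) (hexp_nonneg B y)
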